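/- There exists a temporal fair division instance with n = 2 agents such that no allocation of M is SD-EF1 up to each day. In particular, this holds for the instance with goods g_1,g_2,g_3,g_4 arriving over three days as M_1 = {g_1,g_4}, M_2 = {g_3}, M_3 = {g_2}, where both agents have the identical valuation v(g_1)=4, v(g_2)=3, v(g_3)=2, v(g_4)=1. -/
import Mathlib


open Finset
open scoped Classical

noncomputable section

/-- `A` is an allocation of the set of goods `S` among `n` agents. -/
def IsAlloc {G : Type*} (n : ℕ) (S : Finset G) (A : Fin n → Finset G) : Prop :=
  (∀ i j : Fin n, i ≠ j → Disjoint (A i) (A j)) ∧ Finset.univ.biUnion A = S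

/-- The top-set `H_i(S,g) = {g' ∈ S : v g' ≥ v g}`. -/
def topSet {G : Type*} (v : G → ℝ) (S : Finset G) (g : G) : Finset G :=
  S.filter (fun g' => v g ≤ v g')

/-- Stochastic dominance: `X ≽^SD Y` w.r.t. valuation `v` over the set of goods `S`. -/
def SDge {G : Type*} [DecidableEq G] (v : G → ℝ) (S X Y : Finset G) : Prop :=
  ∀ g ∈ S, (Y ∩ topSet v S g).card ≤ (X ∩ topSet v S g).card

/-- The allocation `A` of goods `S` is SD-EF1. -/
def SDEF1 {G : Type*} [DecidableEq G] (n : ℕ) (v : Fin n → G → ℝ) (S : Finset G)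
    (A : Fin n → Finset G) : Prop :=
  ∀ i j : Fin n, A j ≠ ∅ → ∃ g ∈ A j, SDge (v i) S (A i) ((A j).erase g)

/-- The union of the goods of the first days, up to and including day `t`. -/
def upTo {G : Type*} [DecidableEq G] {k : ℕ} (M : Fin k → Finset G) (t : Fin k) : Finset G :=
  (Finset.Iic t).biUnion M

/-- Goods `g_1, g_2, g_3, g_4` are encoded as `0, 1, 2, 3 : Fin 4`.
The days are `M_1 = {g_1, g_4}`, `M_2 = {g_3}`, `M_3 = {g_2}`. -/
def M5 : Fin 3 → Finset (Fin 4) := ![{0, 3}, {2}, {1}]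

/-- The common valuation: `v g_1 = 4`, `v g_2 = 3`, `v g_3 = 2`, `v g_4 = 1`. -/
def v5 : Fin 4 → ℝ := ![4, 3, 2, 1]


lemma v5_le' (a b : Fin 4) : v5 a ≤ v5 b ↔ b ≤ a := by
  fin_cases a <;> fin_cases b <;> simp [v5] <;> norm_num

/-- Decidable version of the top set for `v5`. -/
def topSet' (S : Finset (Fin 4)) (g : Fin 4) : Finset (Fin 4) := S.filter (fun x => x ≤ g)

lemma topSet_eq (S : Finset (Fin 4)) (g : Fin 4) : topSet v5 S g = topSet' S g := by
  ext x; simp [topSet, topSet', v5_le']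

/-- Decidable version of SD-EF1 for two agents with common valuation `v5`. -/
def SDEF1' (S : Finset (Fin 4)) (A : Fin 2 → Finset (Fin 4)) : Prop :=
  ∀ i j : Fin 2, A j ≠ ∅ → ∃ g ∈ A j, ∀ g' ∈ S,
    (((A j).erase g) ∩ topSet' S g').card ≤ (A i ∩ topSet' S g').card

lemma key : ∀ c : Fin 4 → Fin 2, ¬ ∀ t : Fin 3,
    SDEF1' (upTo M5 t) (fun i => (upTo M5 t).filter (fun g => c g = i)) := by
  unfold SDEF1' topSet' upTo M5
  decide

/-- In the temporal fair division instance with two agents having the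
identical valuation `v5` and days `M5`, no allocation is SD-EF1 up to each day. -/
theorem no_sdef1_upToEachDay_two_agents :
    ∀ A : Fin 2 → Finset (Fin 4),
      IsAlloc 2 (Finset.univ.biUnion M5) A →
      ¬ (∀ t : Fin 3, SDEF1 2 (fun _ => v5) (upTo M5 t) (fun i => A i ∩ upTo M5 t)) := by
  intro A hA h
  have hcov : ∀ g : Fin 4, g ∈ A 0 ∨ g ∈ A 1 := by
    intro g
    have hgM : ∃ i, g ∈ M5 i := by fin_cases g <;> decide
    have h2 := Finset.ext_iff.mp hA.2 g
    simp only [Finset.mem_biUnion, Finset.mem_univ, true_and] at h2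
    rcases h2.mpr hgM with ⟨i, hi⟩
    have hi01 : i = 0 ∨ i = 1 := by omega
    rcases hi01 with rfl | rfl
    · exact Or.inl hi
    · exact Or.inr hi
  have hdisj := hA.1 0 1 (by decide)
  set c : Fin 4 → Fin 2 := fun g => if g ∈ A 0 then 0 else 1 with hc
  have hmem : ∀ (g : Fin 4) (i : Fin 2), g ∈ A i ↔ c g = i := by
    intro g i
    have hi01 : i = 0 ∨ i = 1 := by omega
    rcases hi01 with rfl | rfl
    · constructor
      · intro hg; simp [hc, hg]
      · intro hg; by_contra hng; simp [hc, hng] at hg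
    · constructor
      · intro hg
        have hng : g ∉ A 0 := Finset.disjoint_right.mp hdisj hg
        simp [hc, hng]
      · intro hg
        have hng : g ∉ A 0 := by intro h0; simp [hc, h0] at hg
        rcases hcov g with h0 | h1
        · exact absurd h0 hng
        · exact h1
  have hb : ∀ t : Fin 3,
      (fun i => A i ∩ upTo M5 t) = (fun i => (upTo M5 t).filter (fun g => c g = i)) := by
    intro t; funext i; ext g
    simp only [Finset.mem_inter, Finset.mem_filter, hmem g i]
    tauto
  apply key c
  intro t
  have ht := h t
  rw [hb t] at ht
  intro i j hj
  obtain ⟨g, hg, hsd⟩ := ht i j hj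
  refine ⟨g, hg, fun g' hg' => ?_⟩
  have hle := hsd g' hg'
  rwa [topSet_eq] at hle
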